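/- Let n ≥ 1, and fix A_i > 0 and a_i > 0 for i = 1, …, n, and b > 0, c > 0. Define F(p) = (Σ_{i=1}^n A_i·log₂(1 + a_i·p_i)) / (b·Σ_{i=1}^n p_i + c) on the nonnegative orthant [0,∞)^n. Then F is strictly quasiconcave on [0,∞)^n: for all p ≠ q in [0,∞)^n and all λ ∈ (0,1), F(λp + (1−λ)q) > min(F(p), F(q)). -/

import Mathlib

open Real Finset

lemma logb2_concave_pt {s t l : ℝ} (hs : 0 < s) (ht : 0 < t)
    (hl0 : 0 < l) (hl1 : l < 1) :
    l * Real.logb 2 s + (1 - l) * Real.logb 2 t ≤ Real.logb 2 (l * s + (1 - l) * t) := by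
  have h := strictConcaveOn_log_Ioi.concaveOn.2 (Set.mem_Ioi.mpr hs) (Set.mem_Ioi.mpr ht)
    (show (0:ℝ) ≤ l from hl0.le) (show (0:ℝ) ≤ 1 - l by linarith) (show l + (1 - l) = 1 by ring)
  simp only [smul_eq_mul] at h
  have h2 : (0:ℝ) < Real.log 2 := Real.log_pos (by norm_num)
  unfold Real.logb
  calc (l * (Real.log s / Real.log 2) + (1 - l) * (Real.log t / Real.log 2))
      = (l * Real.log s + (1 - l) * Real.log t) / Real.log 2 := by ring
    _ ≤ Real.log (l * s + (1 - l) * t) / Real.log 2 := by gcongr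

lemma logb2_strictConcave_pt {s t l : ℝ} (hs : 0 < s) (ht : 0 < t) (hst : s ≠ t)
    (hl0 : 0 < l) (hl1 : l < 1) :
    l * Real.logb 2 s + (1 - l) * Real.logb 2 t < Real.logb 2 (l * s + (1 - l) * t) := by
  have h := strictConcaveOn_log_Ioi.2 (Set.mem_Ioi.mpr hs) (Set.mem_Ioi.mpr ht) hst
    (show (0:ℝ) < l from hl0) (show (0:ℝ) < 1 - l by linarith) (show l + (1 - l) = 1 by ring)
  simp only [smul_eq_mul] at h
  have h2 : (0:ℝ) < Real.log 2 := Real.log_pos (by norm_num)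
  unfold Real.logb
  calc (l * (Real.log s / Real.log 2) + (1 - l) * (Real.log t / Real.log 2))
      = (l * Real.log s + (1 - l) * Real.log t) / Real.log 2 := by ring
    _ < Real.log (l * s + (1 - l) * t) / Real.log 2 := by gcongr

/-- The user energy efficiency
`F(p) = (Σ_i A_i·log₂(1 + a_i·p_i)) / (b·Σ_i p_i + c)` is strictly quasiconcave on
the nonnegative orthant: for distinct nonnegative power vectors `p ≠ q` and any
`λ ∈ (0,1)`, `F(λp + (1−λ)q) > min (F p) (F q)`. -/
theorem userEE_strictly_quasiconcave
    (n : ℕ) (hn : 1 ≤ n) (A a : Fin n → ℝ) (b c : ℝ)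
    (hA : ∀ i, 0 < A i) (ha : ∀ i, 0 < a i) (hb : 0 < b) (hc : 0 < c)
    (F : (Fin n → ℝ) → ℝ)
    (hF : ∀ p : Fin n → ℝ,
      F p = (∑ i, A i * Real.logb 2 (1 + a i * p i)) / (b * ∑ i, p i + c)) :
    ∀ p q : Fin n → ℝ, (∀ i, 0 ≤ p i) → (∀ i, 0 ≤ q i) → p ≠ q →
      ∀ l : ℝ, l ∈ Set.Ioo (0 : ℝ) 1 →
        min (F p) (F q) < F (fun i => l * p i + (1 - l) * q i) := by
  intro p q hp hq hpq l hl
  obtain ⟨hl0, hl1⟩ := hl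
  set x : Fin n → ℝ := fun i => l * p i + (1 - l) * q i with hx
  have hDp : 0 < b * ∑ i, p i + c := by
    have : (0:ℝ) ≤ ∑ i, p i := Finset.sum_nonneg fun i _ => hp i
    nlinarith
  have hDq : 0 < b * ∑ i, q i + c := by
    have : (0:ℝ) ≤ ∑ i, q i := Finset.sum_nonneg fun i _ => hq i
    nlinarith
  have hDx_eq : b * ∑ i, x i + c
      = l * (b * ∑ i, p i + c) + (1 - l) * (b * ∑ i, q i + c) := by
    simp only [hx]
    rw [Finset.sum_add_distrib]
    rw [← Finset.mul_sum, ← Finset.mul_sum]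
    ring
  have hDx : 0 < b * ∑ i, x i + c := by rw [hDx_eq]; nlinarith
  -- per-coordinate inequalities
  have hcoord : ∀ i : Fin n,
      l * (A i * Real.logb 2 (1 + a i * p i)) + (1 - l) * (A i * Real.logb 2 (1 + a i * q i))
        ≤ A i * Real.logb 2 (1 + a i * x i) := by
    intro i
    have hs : (0:ℝ) < 1 + a i * p i := by nlinarith [(ha i), (hp i)]
    have ht : (0:ℝ) < 1 + a i * q i := by nlinarith [(ha i), (hq i)]
    have heq : 1 + a i * x i = l * (1 + a i * p i) + (1 - l) * (1 + a i * q i) := by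
      simp only [hx]; ring
    have := logb2_concave_pt hs ht hl0 hl1
    rw [heq]
    nlinarith [(hA i)]
  have hcoordstrict : ∃ i : Fin n,
      l * (A i * Real.logb 2 (1 + a i * p i)) + (1 - l) * (A i * Real.logb 2 (1 + a i * q i))
        < A i * Real.logb 2 (1 + a i * x i) := by
    obtain ⟨i, hi⟩ := Function.ne_iff.mp hpq
    refine ⟨i, ?_⟩
    have hs : (0:ℝ) < 1 + a i * p i := by nlinarith [(ha i), (hp i)]
    have ht : (0:ℝ) < 1 + a i * q i := by nlinarith [(ha i), (hq i)]
    have hst : (1 + a i * p i) ≠ (1 + a i * q i) := by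
      intro h
      apply hi
      have := (ha i).ne'
      exact mul_left_cancel₀ (ha i).ne' (by linarith)
    have heq : 1 + a i * x i = l * (1 + a i * p i) + (1 - l) * (1 + a i * q i) := by
      simp only [hx]; ring
    have := logb2_strictConcave_pt hs ht hst hl0 hl1
    rw [heq]
    nlinarith [(hA i)]
  -- numerator inequality
  have hNx : l * (∑ i, A i * Real.logb 2 (1 + a i * p i))
      + (1 - l) * (∑ i, A i * Real.logb 2 (1 + a i * q i))
      < ∑ i, A i * Real.logb 2 (1 + a i * x i) := by
    rw [Finset.mul_sum, Finset.mul_sum, ← Finset.sum_add_distrib]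
    obtain ⟨i, hi⟩ := hcoordstrict
    exact Finset.sum_lt_sum (fun j _ => hcoord j) ⟨i, Finset.mem_univ i, hi⟩
  set m := min (F p) (F q) with hm
  have hmp : m * (b * ∑ i, p i + c) ≤ ∑ i, A i * Real.logb 2 (1 + a i * p i) := by
    have h1 : m ≤ F p := min_le_left _ _
    rw [hF p] at h1
    exact (le_div_iff₀ hDp).mp h1
  have hmq : m * (b * ∑ i, q i + c) ≤ ∑ i, A i * Real.logb 2 (1 + a i * q i) := by
    have h1 : m ≤ F q := min_le_right _ _
    rw [hF q] at h1
    exact (le_div_iff₀ hDq).mp h1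
  have final : m * (b * ∑ i, x i + c) < ∑ i, A i * Real.logb 2 (1 + a i * x i) := by
    rw [hDx_eq]
    nlinarith
  rw [hF x]
  exact (lt_div_iff₀ hDx).mpr final
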